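/- Let (W₁, W₂) be a pair of independent standard Brownian motions, and fix μ₁, μ₂ ∈ ℝ and c ≥ 0. For d ≥ 0 and continuous paths (w₁, w₂), call Q = (Q₁, Q₂) a d-regularized solution if Q₁, Q₂ : [0,1] → ℝ are continuous with Q₁(0) = Q₂(0) = 0, Q₁(t) + Q₂(t) = t for all t, and Q₁ is differentiable on [0,1] with Q₁'(t) = Φ( (Q₂(t)·S₁(t) − Q₁(t)·S₂(t)) / √( t·Q₁(t)·Q₂(t) + t²·c + d ) ), where S_k(t) = μ_k·Q_k(t) + w_k(Q_k(t)) for k = 1,2. Then almost surely the following holds: if (d_j)_{j∈ℕ} is a sequence with d_j > 0 and d_j → 0, if for each j the pair Q^j is a d_j-regularized solution driven by (W₁(ω), W₂(ω)), and if along a subsequence (j_k) the functions Q^{j_k} converge uniformly on [0,1] to a limit Q = (Q₁, Q₂), then for every t ∈ (0,1] at which 0 < Q₁(t) < t, Q₁ is differentiable at t and satisfies Q₁'(t) = Φ( (Q₂(t)·S₁(t) − Q₁(t)·S₂(t)) / √( t·Q₁(t)·Q₂(t) + t²·c ) ) with S_k(t) = μ_k·Q_k(t) + W_k(ω)(Q_k(t)).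 -/

import Mathlib

open MeasureTheory ProbabilityTheory Filter Set Topology

/-- The standard normal distribution function `Φ`. -/
noncomputable def Phi (x : ℝ) : ℝ :=
  ∫ s in Set.Iic x, (Real.sqrt (2 * Real.pi))⁻¹ * Real.exp (-s ^ 2 / 2)

lemma integrable_gauss :
    Integrable (fun s : ℝ => (Real.sqrt (2 * Real.pi))⁻¹ * Real.exp (-s ^ 2 / 2)) := by
  have h : (fun s : ℝ => (Real.sqrt (2 * Real.pi))⁻¹ * Real.exp (-s ^ 2 / 2))
      = fun s : ℝ => (Real.sqrt (2 * Real.pi))⁻¹ * Real.exp (-(1/2 : ℝ) * s ^ 2) := by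
    funext s; congr 1; ring_nf
  rw [h]
  exact (integrable_exp_neg_mul_sq (by norm_num)).const_mul _

lemma Phi_nonneg (x : ℝ) : 0 ≤ Phi x :=
  setIntegral_nonneg measurableSet_Iic (fun s _ => by positivity)

lemma Phi_le_one (x : ℝ) : Phi x ≤ 1 := by
  have h1 : Phi x ≤ ∫ s : ℝ, (Real.sqrt (2 * Real.pi))⁻¹ * Real.exp (-s ^ 2 / 2) :=
    setIntegral_le_integral integrable_gauss (Filter.Eventually.of_forall fun s => by positivity)
  have h2 : (∫ s : ℝ, (Real.sqrt (2 * Real.pi))⁻¹ * Real.exp (-s ^ 2 / 2)) = 1 := by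
    rw [MeasureTheory.integral_const_mul]
    have h : (fun s : ℝ => Real.exp (-s ^ 2 / 2)) = fun s : ℝ => Real.exp (-(1/2 : ℝ) * s ^ 2) := by
      funext s; congr 1; ring_nf
    rw [h, integral_gaussian, show Real.pi / (1/2 : ℝ) = 2 * Real.pi by ring]
    refine inv_mul_cancel₀ ?_
    exact Real.sqrt_ne_zero'.mpr (by positivity)
  calc Phi x ≤ _ := h1
    _ = 1 := h2

lemma Phi_continuous : Continuous Phi := by
  have h : Phi = fun x => Phi 0 + ∫ s in (0:ℝ)..x,
      (Real.sqrt (2 * Real.pi))⁻¹ * Real.exp (-s ^ 2 / 2) := by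
    funext x
    rw [← intervalIntegral.integral_Iic_sub_Iic integrable_gauss.integrableOn integrable_gauss.integrableOn]
    show (∫ s in Set.Iic x, (Real.sqrt (2 * Real.pi))⁻¹ * Real.exp (-s ^ 2 / 2))
      = (∫ s in Set.Iic (0:ℝ), (Real.sqrt (2 * Real.pi))⁻¹ * Real.exp (-s ^ 2 / 2)) + _
    ring
  rw [h]
  exact continuous_const.add (integrable_gauss.continuous_primitive 0)

/-- `W` is a standard Brownian motion under `P`: continuous sample paths, `W₀ = 0`,
Gaussian increments `W_t - W_s ~ N(0, t - s)`, and independent increments. -/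
def IsStdBM {Ω : Type*} [MeasurableSpace Ω] (P : Measure Ω) (W : ℝ → Ω → ℝ) : Prop :=
  (∀ ω, Continuous fun t => W t ω) ∧
  (∀ ω, W 0 ω = 0) ∧
  (∀ s t : ℝ, 0 ≤ s → s < t →
    Measure.map (fun ω => W t ω - W s ω) P = gaussianReal 0 (Real.toNNReal (t - s))) ∧
  (∀ (n : ℕ) (t : Fin (n + 1) → ℝ), (∀ i, 0 ≤ t i) → StrictMono t →
    iIndepFun
      (fun i : Fin n => fun ω => W (t i.succ) ω - W (t i.castSucc) ω) P)

/-- `W₁, W₂` are independent standard Brownian motions under `P`. -/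
def IndepBMs {Ω : Type*} [MeasurableSpace Ω] (P : Measure Ω) (W₁ W₂ : ℝ → Ω → ℝ) : Prop :=
  IsStdBM P W₁ ∧ IsStdBM P W₂ ∧
  IndepFun (fun ω => fun t => W₁ t ω) (fun ω => fun t => W₂ t ω) P

/-- A `d`-regularized solution of the two-armed Thompson sampling limit ODE driven by
`(w₁, w₂)`, with means `(μ₁, μ₂)` and smoothing parameters `c, d`. -/
def IsRegSol (w₁ w₂ : ℝ → ℝ) (μ₁ μ₂ c d : ℝ) (Q₁ Q₂ : ℝ → ℝ) : Prop :=
  ContinuousOn Q₁ (Set.Icc 0 1) ∧ ContinuousOn Q₂ (Set.Icc 0 1) ∧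
  Q₁ 0 = 0 ∧ Q₂ 0 = 0 ∧ (∀ t ∈ Set.Icc (0 : ℝ) 1, Q₁ t + Q₂ t = t) ∧
  (∀ t ∈ Set.Icc (0 : ℝ) 1,
    HasDerivWithinAt Q₁
      (Phi ((Q₂ t * (μ₁ * Q₁ t + w₁ (Q₁ t)) - Q₁ t * (μ₂ * Q₂ t + w₂ (Q₂ t))) /
        Real.sqrt (t * Q₁ t * Q₂ t + t ^ 2 * c + d))) (Set.Icc 0 1) t)

lemma regSol_bounds {w₁ w₂ : ℝ → ℝ} {μ₁ μ₂ c d : ℝ} {Q₁ Q₂ : ℝ → ℝ}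
    (h : IsRegSol w₁ w₂ μ₁ μ₂ c d Q₁ Q₂) :
    ∀ s ∈ Set.Icc (0:ℝ) 1, 0 ≤ Q₁ s ∧ Q₁ s ≤ s := by
  obtain ⟨hc1, hc2, h10, h20, hsum, hderiv⟩ := h
  have hDA : ∀ x ∈ Set.Ioo (0:ℝ) 1, HasDerivAt Q₁
      (Phi ((Q₂ x * (μ₁ * Q₁ x + w₁ (Q₁ x)) - Q₁ x * (μ₂ * Q₂ x + w₂ (Q₂ x))) /
        Real.sqrt (x * Q₁ x * Q₂ x + x ^ 2 * c + d))) x := fun x hx =>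
    (hderiv x (Set.Ioo_subset_Icc_self hx)).hasDerivAt (Icc_mem_nhds hx.1 hx.2)
  have hmono1 : MonotoneOn Q₁ (Set.Icc 0 1) := by
    apply monotoneOn_of_deriv_nonneg (convex_Icc 0 1) hc1
    · intro x hx
      rw [interior_Icc] at hx
      exact (hDA x hx).differentiableAt.differentiableWithinAt
    · intro x hx
      rw [interior_Icc] at hx
      rw [(hDA x hx).deriv]
      exact Phi_nonneg _
  have hmono2 : MonotoneOn (fun s => s - Q₁ s) (Set.Icc 0 1) := by
    apply monotoneOn_of_deriv_nonneg (convex_Icc 0 1) (continuousOn_id.sub hc1)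
    · intro x hx
      rw [interior_Icc] at hx
      exact ((hasDerivAt_id x).sub (hDA x hx)).differentiableAt.differentiableWithinAt
    · intro x hx
      rw [interior_Icc] at hx
      rw [((hasDerivAt_id x).sub (hDA x hx)).deriv]
      have := Phi_le_one ((Q₂ x * (μ₁ * Q₁ x + w₁ (Q₁ x)) - Q₁ x * (μ₂ * Q₂ x + w₂ (Q₂ x))) /
        Real.sqrt (x * Q₁ x * Q₂ x + x ^ 2 * c + d))
      linarith
  intro s hs
  have h0mem : (0:ℝ) ∈ Set.Icc (0:ℝ) 1 := ⟨le_refl 0, zero_le_one⟩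
  constructor
  · have := hmono1 h0mem hs hs.1
    rwa [h10] at this
  · have := hmono2 h0mem hs hs.1
    simp only [] at this
    simp only [h10] at this
    linarith

/-- Almost surely, any uniform limit along a subsequence of `d_j`-regularized solutions
(`d_j → 0`) satisfies the two-armed Thompson sampling limit ODE at every `t ∈ (0,1]`
with `0 < Q₁(t) < t`. -/
theorem two_arm_limit_d_to_zero {Ω : Type*} [MeasurableSpace Ω] (P : Measure Ω)
    (W₁ W₂ : ℝ → Ω → ℝ) (hW : IndepBMs P W₁ W₂) (μ₁ μ₂ c : ℝ) (hc : 0 ≤ c) :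
    ∀ᵐ ω ∂P, ∀ dseq : ℕ → ℝ,
      (∀ j, 0 < dseq j) → Tendsto dseq atTop (nhds 0) →
      ∀ Q₁ Q₂ : ℕ → ℝ → ℝ,
        (∀ j, IsRegSol (fun x => W₁ x ω) (fun x => W₂ x ω) μ₁ μ₂ c (dseq j)
          (Q₁ j) (Q₂ j)) →
        ∀ jk : ℕ → ℕ, StrictMono jk →
        ∀ L₁ L₂ : ℝ → ℝ,
          TendstoUniformlyOn (fun k => Q₁ (jk k)) L₁ atTop (Set.Icc 0 1) →
          TendstoUniformlyOn (fun k => Q₂ (jk k)) L₂ atTop (Set.Icc 0 1) →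
          ∀ t ∈ Set.Ioc (0 : ℝ) 1, 0 < L₁ t → L₁ t < t →
            HasDerivWithinAt L₁
              (Phi ((L₂ t * (μ₁ * L₁ t + W₁ (L₁ t) ω) -
                  L₁ t * (μ₂ * L₂ t + W₂ (L₂ t) ω)) /
                Real.sqrt (t * L₁ t * L₂ t + t ^ 2 * c))) (Set.Icc 0 1) t := by
  obtain ⟨hBM1, hBM2, -⟩ := hW
  refine Filter.Eventually.of_forall ?_
  intro ω dseq hdpos hdlim Q₁ Q₂ hsol jk hjk L₁ L₂ hU1 hU2 t ht hpos hlt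
  set w₁ : ℝ → ℝ := fun x => W₁ x ω with hw₁def
  set w₂ : ℝ → ℝ := fun x => W₂ x ω with hw₂def
  have hw₁ : Continuous w₁ := hBM1.1 ω
  have hw₂ : Continuous w₂ := hBM2.1 ω
  -- basic facts about each regularized solution
  have hbounds : ∀ j, ∀ s ∈ Set.Icc (0:ℝ) 1, 0 ≤ Q₁ j s ∧ Q₁ j s ≤ s :=
    fun j => regSol_bounds (hsol j)
  have hq2eq : ∀ j, ∀ s ∈ Set.Icc (0:ℝ) 1, Q₂ j s = s - Q₁ j s := by
    intro j s hs
    have := (hsol j).2.2.2.2.1 s hs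
    linarith
  -- the drift of the `j`-th solution
  set g : ℕ → ℝ → ℝ := fun j s =>
    Phi ((Q₂ j s * (μ₁ * Q₁ j s + w₁ (Q₁ j s)) - Q₁ j s * (μ₂ * Q₂ j s + w₂ (Q₂ j s))) /
      Real.sqrt (s * Q₁ j s * Q₂ j s + s ^ 2 * c + dseq j)) with hgdef
  have hDjpos : ∀ j, ∀ s ∈ Set.Icc (0:ℝ) 1,
      0 < s * Q₁ j s * Q₂ j s + s ^ 2 * c + dseq j := by
    intro j s hs
    obtain ⟨h1, h2⟩ := hbounds j s hs
    have h3 : 0 ≤ Q₂ j s := by rw [hq2eq j s hs]; linarith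
    have h4 : 0 ≤ s * Q₁ j s * Q₂ j s := mul_nonneg (mul_nonneg hs.1 h1) h3
    have h5 : 0 ≤ s ^ 2 * c := mul_nonneg (sq_nonneg s) hc
    linarith [hdpos j]
  have hgcont : ∀ j, ContinuousOn (g j) (Set.Icc 0 1) := by
    intro j
    have hQ1c := (hsol j).1
    have hQ2c := (hsol j).2.1
    have hnum : ContinuousOn (fun s =>
        Q₂ j s * (μ₁ * Q₁ j s + w₁ (Q₁ j s)) - Q₁ j s * (μ₂ * Q₂ j s + w₂ (Q₂ j s)))
        (Set.Icc 0 1) :=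
      (hQ2c.mul ((continuousOn_const.mul hQ1c).add (hw₁.comp_continuousOn hQ1c))).sub
        (hQ1c.mul ((continuousOn_const.mul hQ2c).add (hw₂.comp_continuousOn hQ2c)))
    have hden : ContinuousOn (fun s => Real.sqrt (s * Q₁ j s * Q₂ j s + s ^ 2 * c + dseq j))
        (Set.Icc 0 1) :=
      Real.continuous_sqrt.comp_continuousOn
        ((((continuousOn_id.mul hQ1c).mul hQ2c).add
          ((continuousOn_id.pow 2).mul continuousOn_const)).add continuousOn_const)
    exact Phi_continuous.comp_continuousOn
      (hnum.div hden (fun s hs => ne_of_gt (Real.sqrt_pos.mpr (hDjpos j s hs))))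
  -- fundamental theorem of calculus for each solution
  have hFTC : ∀ j, ∀ a u : ℝ, 0 < a → a ≤ u → u ≤ 1 →
      (∫ s in a..u, g j s) = Q₁ j u - Q₁ j a := by
    intro j a u ha hau hu1
    have hsub : Set.Icc a u ⊆ Set.Icc (0:ℝ) 1 := Set.Icc_subset_Icc ha.le hu1
    apply intervalIntegral.integral_eq_sub_of_hasDeriv_right_of_le hau ((hsol j).1.mono hsub)
    · intro s hs
      exact (((hsol j).2.2.2.2.2 s ⟨(ha.trans hs.1).le, (hs.2.trans_le hu1).le⟩).hasDerivAt
        (Icc_mem_nhds (ha.trans hs.1) (hs.2.trans_le hu1))).hasDerivWithinAt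
    · exact ((hgcont j).mono (by rw [Set.uIcc_of_le hau]; exact hsub)).intervalIntegrable
  -- limit facts
  have hptQ1 : ∀ s ∈ Set.Icc (0:ℝ) 1, Tendsto (fun k => Q₁ (jk k) s) atTop (𝓝 (L₁ s)) :=
    fun s hs => hU1.tendsto_at hs
  have hptQ2 : ∀ s ∈ Set.Icc (0:ℝ) 1, Tendsto (fun k => Q₂ (jk k) s) atTop (𝓝 (L₂ s)) :=
    fun s hs => hU2.tendsto_at hs
  have hsumL : ∀ s ∈ Set.Icc (0:ℝ) 1, L₂ s = s - L₁ s := by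
    intro s hs
    have h1 := (hptQ1 s hs).add (hptQ2 s hs)
    have h2 : Tendsto (fun k => Q₁ (jk k) s + Q₂ (jk k) s) atTop (𝓝 s) :=
      Tendsto.congr (fun k => ((hsol (jk k)).2.2.2.2.1 s hs).symm) tendsto_const_nhds
    have := tendsto_nhds_unique h1 h2
    linarith
  have hL1c : ContinuousOn L₁ (Set.Icc 0 1) :=
    hU1.continuousOn (Filter.Eventually.of_forall fun k => (hsol (jk k)).1).frequently
  have hL2c : ContinuousOn L₂ (Set.Icc 0 1) :=
    hU2.continuousOn (Filter.Eventually.of_forall fun k => (hsol (jk k)).2.1).frequently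
  set D : ℝ → ℝ := fun s => s * L₁ s * L₂ s + s ^ 2 * c with hDdef
  have hDc : ContinuousOn D (Set.Icc 0 1) :=
    (((continuousOn_id.mul hL1c).mul hL2c).add
      ((continuousOn_id.pow 2).mul continuousOn_const))
  have htmem : t ∈ Set.Icc (0:ℝ) 1 := ⟨ht.1.le, ht.2⟩
  have hL2t : L₂ t = t - L₁ t := hsumL t htmem
  have hL2pos : 0 < L₂ t := by rw [hL2t]; linarith
  have hDt : 0 < D t := by
    have h1 : 0 < t * L₁ t * L₂ t := mul_pos (mul_pos ht.1 hpos) hL2pos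
    have h2 : 0 ≤ t ^ 2 * c := mul_nonneg (sq_nonneg t) hc
    simp only [hDdef]
    linarith
  -- find a window [a, b] around t on which D is bounded below
  have hev : ∀ᶠ s in nhdsWithin t (Set.Icc 0 1), D t / 2 < D s :=
    (hDc t htmem).eventually (eventually_gt_nhds (half_lt_self hDt))
  obtain ⟨ε, hε, hball⟩ := Metric.mem_nhdsWithin_iff.1 hev
  set δ : ℝ := min (ε/2) (t/2) with hδdef
  have hδpos : 0 < δ := lt_min (half_pos hε) (half_pos ht.1)
  have hδε : δ ≤ ε/2 := min_le_left _ _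
  have hδt : δ ≤ t/2 := min_le_right _ _
  set a : ℝ := t - δ with hadef
  set b : ℝ := min (t + δ) 1 with hbdef
  have ha0 : 0 < a := by simp only [hadef]; linarith
  have hat : a < t := by simp only [hadef]; linarith
  have htb : t ≤ b := le_min (by linarith) ht.2
  have hb1 : b ≤ 1 := min_le_right _ _
  have hab : a ≤ b := hat.le.trans htb
  have hsubab : Set.Icc a b ⊆ Set.Icc (0:ℝ) 1 :=
    fun x hx => ⟨ha0.le.trans hx.1, hx.2.trans hb1⟩
  have hDb : ∀ s ∈ Set.Icc a b, 0 < D s := by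
    intro s hs
    have hstδ : s ≤ t + δ := hs.2.trans (min_le_left _ _)
    have hsa : a ≤ s := hs.1
    have hmem : s ∈ Metric.ball t ε ∩ Set.Icc 0 1 := by
      constructor
      · rw [Metric.mem_ball, Real.dist_eq, abs_sub_lt_iff]
        constructor <;> simp only [hadef] at hsa <;> linarith
      · exact hsubab hs
    have h6 : D t / 2 < D s := hball hmem
    exact (half_pos hDt).trans h6
  -- limiting drift, extended continuously to all of ℝ
  set gL : ℝ → ℝ := fun s =>
    Phi ((L₂ s * (μ₁ * L₁ s + w₁ (L₁ s)) - L₁ s * (μ₂ * L₂ s + w₂ (L₂ s))) /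
      Real.sqrt (D s)) with hgLdef
  have hgLc : ContinuousOn gL (Set.Icc a b) := by
    have hL1c' := hL1c.mono hsubab
    have hL2c' := hL2c.mono hsubab
    have hnum : ContinuousOn (fun s =>
        L₂ s * (μ₁ * L₁ s + w₁ (L₁ s)) - L₁ s * (μ₂ * L₂ s + w₂ (L₂ s))) (Set.Icc a b) :=
      (hL2c'.mul ((continuousOn_const.mul hL1c').add (hw₁.comp_continuousOn hL1c'))).sub
        (hL1c'.mul ((continuousOn_const.mul hL2c').add (hw₂.comp_continuousOn hL2c')))
    have hden : ContinuousOn (fun s => Real.sqrt (D s)) (Set.Icc a b) :=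
      Real.continuous_sqrt.comp_continuousOn (hDc.mono hsubab)
    exact Phi_continuous.comp_continuousOn
      (hnum.div hden (fun s hs => ne_of_gt (Real.sqrt_pos.mpr (hDb s hs))))
  set gE : ℝ → ℝ := fun u => gL (max a (min b u)) with hgEdef
  have hproj : ∀ u : ℝ, max a (min b u) ∈ Set.Icc a b :=
    fun u => ⟨le_max_left _ _, max_le hab (min_le_left _ _)⟩
  have hgE : Continuous gE :=
    hgLc.comp_continuous (continuous_const.max (continuous_const.min continuous_id)) hproj
  have hgEeq : ∀ s ∈ Set.Icc a b, gE s = gL s := by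
    intro s hs
    simp only [hgEdef]
    rw [min_eq_right hs.2, max_eq_right hs.1]
  -- pointwise convergence of the drifts on [a, b]
  have hptg : ∀ s ∈ Set.Icc a b, Tendsto (fun k => g (jk k) s) atTop (𝓝 (gE s)) := by
    intro s hs
    rw [hgEeq s hs]
    have hs01 := hsubab hs
    have h1 := hptQ1 s hs01
    have h2 := hptQ2 s hs01
    have hdk : Tendsto (fun k => dseq (jk k)) atTop (𝓝 0) := hdlim.comp hjk.tendsto_atTop
    have hnum : Tendsto (fun k =>
        Q₂ (jk k) s * (μ₁ * Q₁ (jk k) s + w₁ (Q₁ (jk k) s)) -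
          Q₁ (jk k) s * (μ₂ * Q₂ (jk k) s + w₂ (Q₂ (jk k) s))) atTop
        (𝓝 (L₂ s * (μ₁ * L₁ s + w₁ (L₁ s)) - L₁ s * (μ₂ * L₂ s + w₂ (L₂ s)))) :=
      (h2.mul ((tendsto_const_nhds.mul h1).add ((hw₁.tendsto _).comp h1))).sub
        (h1.mul ((tendsto_const_nhds.mul h2).add ((hw₂.tendsto _).comp h2)))
    have hden0 : Tendsto (fun k =>
        s * Q₁ (jk k) s * Q₂ (jk k) s + s ^ 2 * c + dseq (jk k)) atTop (𝓝 (D s)) := by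
      have h : Tendsto (fun k =>
          s * Q₁ (jk k) s * Q₂ (jk k) s + s ^ 2 * c + dseq (jk k)) atTop
          (𝓝 (s * L₁ s * L₂ s + s ^ 2 * c + 0)) :=
        (((tendsto_const_nhds.mul h1).mul h2).add tendsto_const_nhds).add hdk
      rw [add_zero] at h
      exact h
    have hden : Tendsto (fun k =>
        Real.sqrt (s * Q₁ (jk k) s * Q₂ (jk k) s + s ^ 2 * c + dseq (jk k))) atTop
        (𝓝 (Real.sqrt (D s))) := (Real.continuous_sqrt.tendsto _).comp hden0
    have hfrac := hnum.div hden (ne_of_gt (Real.sqrt_pos.mpr (hDb s hs)))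
    exact (Phi_continuous.tendsto _).comp hfrac
  -- key integral identity for the limit
  have hkey : ∀ u ∈ Set.Icc a b, L₁ u = L₁ a + ∫ s in a..u, gE s := by
    intro u hu
    have hau : a ≤ u := hu.1
    have hu1 : u ≤ 1 := hu.2.trans hb1
    have hFTCk : ∀ k, (∫ s in a..u, g (jk k) s) = Q₁ (jk k) u - Q₁ (jk k) a :=
      fun k => hFTC (jk k) a u ha0 hau hu1
    have hamem : a ∈ Set.Icc a b := ⟨le_refl a, hab⟩
    have hlhs : Tendsto (fun k => Q₁ (jk k) u - Q₁ (jk k) a) atTop (𝓝 (L₁ u - L₁ a)) :=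
      (hptQ1 u (hsubab hu)).sub (hptQ1 a (hsubab hamem))
    have hIsub : Set.uIoc a u ⊆ Set.Icc a b := by
      rw [Set.uIoc_of_le hau]
      exact fun x hx => ⟨hx.1.le, hx.2.trans hu.2⟩
    have hrhs : Tendsto (fun k => ∫ s in a..u, g (jk k) s) atTop (𝓝 (∫ s in a..u, gE s)) := by
      apply intervalIntegral.tendsto_integral_filter_of_dominated_convergence (fun _ => (1:ℝ))
      · exact Filter.Eventually.of_forall fun k =>
          ((hgcont (jk k)).mono (fun x hx => hsubab (hIsub hx))).aestronglyMeasurable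
            measurableSet_uIoc
      · refine Filter.Eventually.of_forall fun k => Filter.Eventually.of_forall fun x hx => ?_
        rw [Real.norm_eq_abs, abs_le]
        exact ⟨le_trans (by norm_num) (Phi_nonneg _), Phi_le_one _⟩
      · exact intervalIntegrable_const
      · exact Filter.Eventually.of_forall fun x hx => hptg x (hIsub hx)
    have := tendsto_nhds_unique hlhs (hrhs.congr hFTCk)
    linarith
  -- conclude via FTC-1 for the limiting primitive
  have hH : HasDerivAt (fun u => ∫ s in a..u, gE s) (gE t) t :=
    intervalIntegral.integral_hasDerivAt_right (hgE.intervalIntegrable a t)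
      (hgE.stronglyMeasurableAtFilter _ _) hgE.continuousAt
  have htab : t ∈ Set.Icc a b := ⟨hat.le, htb⟩
  have hL : HasDerivWithinAt L₁ (gE t) (Set.Icc a b) t :=
    ((hH.const_add (L₁ a)).hasDerivWithinAt).congr hkey (hkey t htab)
  have hmem : Set.Icc a b ∈ nhdsWithin t (Set.Icc 0 1) := by
    rw [mem_nhdsWithin]
    refine ⟨Set.Ioo a (t + δ), isOpen_Ioo, ⟨hat, lt_add_of_pos_right t hδpos⟩, ?_⟩
    rintro x ⟨⟨hx1, hx2⟩, hx3, hx4⟩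
    exact ⟨hx1.le, le_min hx2.le hx4⟩
  have hfinal := hL.mono_of_mem_nhdsWithin hmem
  rw [hgEeq t htab] at hfinal
  exact hfinal
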